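/- Let G be a finite group with supersoluble normal subgroups A and B such that G = AB and the derived subgroup G' is nilpotent. Then G is supersoluble. (Baer's theorem.) -/

import Mathlib

/-- A subgroup `H` of `G` is subnormal if there is a chain
`H = c 0 ≤ c 1 ≤ ... ≤ c n = G` with each term normal in the next. -/
def Subgroup.IsSubnormal' {G : Type*} [Group G] (H : Subgroup G) : Prop :=
  ∃ (n : ℕ) (c : Fin (n + 1) → Subgroup G),
    c 0 = H ∧ c (Fin.last n) = ⊤ ∧
    ∀ i : Fin n, c i.castSucc ≤ c i.succ ∧
      ((c i.castSucc).subgroupOf (c i.succ)).Normal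

/-- A group is supersoluble if it has a normal series (all terms normal in `G`)
with cyclic factors; the factor `c (i+1) / c i` being cyclic is expressed as
`c (i+1)` being generated by `c i` together with a single element. -/
def IsSupersolvable (G : Type*) [Group G] : Prop :=
  ∃ (n : ℕ) (c : Fin (n + 1) → Subgroup G),
    c 0 = ⊥ ∧ c (Fin.last n) = ⊤ ∧
    (∀ i, (c i).Normal) ∧
    ∀ i : Fin n, c i.castSucc ≤ c i.succ ∧
      ∃ g ∈ c i.succ, c i.succ ≤ c i.castSucc ⊔ Subgroup.zpowers g

/-- The Fitting subgroup: the join of all normal nilpotent subgroups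
(in a finite group, the largest normal nilpotent subgroup). -/
def fittingSubgroup (G : Type*) [Group G] : Subgroup G :=
  sSup {N : Subgroup G | N.Normal ∧ Group.IsNilpotent N}

instance fittingSubgroup_normal (G : Type*) [Group G] : (fittingSubgroup G).Normal := by
  constructor
  intro x hx g
  rw [fittingSubgroup, sSup_eq_iSup'] at hx ⊢
  refine Subgroup.iSup_induction
    (C := fun y => g * y * g⁻¹ ∈
      ⨆ (N : {N : Subgroup G // N.Normal ∧ Group.IsNilpotent N}), (N : Subgroup G))
    _ hx (fun N y hy => ?_) (by simpa using Subgroup.one_mem _) (fun y z hy hz => ?_)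
  · exact Subgroup.mem_iSup_of_mem N (N.2.1.conj_mem y hy g)
  · simpa [mul_assoc] using Subgroup.mul_mem _ hy hz

/-- `O_p(G)`: the join of all normal `p`-subgroups
(in a finite group, the largest normal `p`-subgroup). -/
def pCore (p : ℕ) (G : Type*) [Group G] : Subgroup G :=
  sSup {N : Subgroup G | N.Normal ∧ IsPGroup p N}

instance pCore_normal (p : ℕ) (G : Type*) [Group G] : (pCore p G).Normal := by
  constructor
  intro x hx g
  rw [pCore, sSup_eq_iSup'] at hx ⊢
  refine Subgroup.iSup_induction
    (C := fun y => g * y * g⁻¹ ∈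
      ⨆ (N : {N : Subgroup G // N.Normal ∧ IsPGroup p N}), (N : Subgroup G))
    _ hx (fun N y hy => ?_) (by simpa using Subgroup.one_mem _) (fun y z hy hz => ?_)
  · exact Subgroup.mem_iSup_of_mem N (N.2.1.conj_mem y hy g)
  · simpa [mul_assoc] using Subgroup.mul_mem _ hy hz

/-- `G` has a Sylow tower of supersoluble type: a normal series `⊥ = c 0 ≤ ... ≤ c n = ⊤`
(all terms normal in `G`) together with strictly decreasing primes `p 0 > p 1 > ... `
exhausting the primes dividing `|G|`, such that each factor `c (i+1) / c i` is a
Sylow `p i`-subgroup of `G / c i` (i.e. has order the full `p i`-part of `|G|`). -/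
def HasSupersolubleSylowTower (G : Type*) [Group G] : Prop :=
  ∃ (n : ℕ) (c : Fin (n + 1) → Subgroup G) (p : Fin n → ℕ),
    c 0 = ⊥ ∧ c (Fin.last n) = ⊤ ∧
    (∀ i, (c i).Normal) ∧
    (∀ i : Fin n, c i.castSucc ≤ c i.succ) ∧
    (∀ i, (p i).Prime) ∧
    (∀ i j : Fin n, i < j → p j < p i) ∧
    (∀ q : ℕ, q.Prime → q ∣ Nat.card G → ∃ i, p i = q) ∧
    (∀ i : Fin n,
      Nat.card (c i.succ) = Nat.card (c i.castSucc) * p i ^ (Nat.card G).factorization (p i))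


theorem ss_of_surjective {G H : Type*} [Group G] [Group H] (f : G →* H)
    (hf : Function.Surjective f) (h : IsSupersolvable G) : IsSupersolvable H := by
  obtain ⟨n, c, h0, hl, hnorm, hfac⟩ := h
  refine ⟨n, fun i => (c i).map f, ?_, ?_, fun i => (hnorm i).map f hf, fun i => ?_⟩
  · show (c 0).map f = ⊥
    rw [h0]
    exact Subgroup.map_bot f
  · show (c (Fin.last n)).map f = ⊤
    rw [hl]
    exact Subgroup.map_top_of_surjective f hf
  · obtain ⟨hle, g, hg, hgen⟩ := hfac i
    refine ⟨Subgroup.map_mono hle, f g, Subgroup.mem_map_of_mem f hg, ?_⟩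
    calc (c i.succ).map f ≤ (c i.castSucc ⊔ Subgroup.zpowers g).map f := Subgroup.map_mono hgen
    _ = (c i.castSucc).map f ⊔ Subgroup.zpowers (f g) := by
        rw [Subgroup.map_sup, f.map_zpowers]

theorem minimal_normal_exists (G : Type*) [Group G] [Finite G] [Nontrivial G] :
    ∃ N : Subgroup G, N.Normal ∧ N ≠ ⊥ ∧
      ∀ M : Subgroup G, M.Normal → M ≤ N → M ≠ ⊥ → M = N := by
  have hS : (⊤ : Subgroup G) ∈ {N : Subgroup G | N.Normal ∧ N ≠ ⊥} :=
    ⟨inferInstance, fun h => by simpa [h] using (bot_ne_top (α := Subgroup G))⟩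
  obtain ⟨N, hN, hmin⟩ := (Set.toFinite _).exists_minimal ⟨⊤, hS⟩
  refine ⟨N, hN.1, hN.2, fun M hM hle hne => ?_⟩
  exact le_antisymm hle (hmin ⟨hM, hne⟩ hle)

theorem nilp_center {C : Type*} [Group C] [Group.IsNilpotent C] (H : Subgroup C)
    (hH : H.Normal) (hnt : H ≠ ⊥) : ∃ x ∈ H, x ≠ 1 ∧ x ∈ Subgroup.center C := by
  obtain ⟨n, hn⟩ := Group.IsNilpotent.nilpotent C
  have hP : ∃ m, H ⊓ Subgroup.upperCentralSeries C m ≠ ⊥ := ⟨n, by simpa [hn]⟩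
  classical
  set m := Nat.find hP with hm
  have hPm : H ⊓ Subgroup.upperCentralSeries C m ≠ ⊥ := Nat.find_spec hP
  have hm0 : m ≠ 0 := by
    intro h
    rw [h] at hPm
    simp [Subgroup.upperCentralSeries_zero] at hPm
  obtain ⟨k, hk⟩ := Nat.exists_eq_succ_of_ne_zero hm0
  have hprev : H ⊓ Subgroup.upperCentralSeries C k = ⊥ := by
    by_contra h
    have h5 : m ≤ k := Nat.find_le h
    omega
  obtain ⟨x, hx, hx1⟩ := (Subgroup.bot_or_exists_ne_one _).resolve_left hPm
  refine ⟨x, hx.1, hx1, ?_⟩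
  rw [Subgroup.mem_center_iff]
  intro y
  have hcomm : x * y * x⁻¹ * y⁻¹ ∈ H ⊓ Subgroup.upperCentralSeries C k := by
    constructor
    · have h6 : x * (y * x⁻¹ * y⁻¹) ∈ H := by
        refine H.mul_mem hx.1 ?_
        have := hH.conj_mem x⁻¹ (H.inv_mem hx.1) y
        simpa [mul_assoc] using this
      simpa [mul_assoc] using h6
    · have h7 := hx.2
      rw [hk] at h7
      exact (mem_upperCentralSeries_succ_iff).mp h7 y
  rw [hprev] at hcomm
  have he : x * y * x⁻¹ * y⁻¹ = 1 := by simpa using hcomm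
  have h4 : x * y * x⁻¹ = y := mul_inv_eq_one.mp he
  calc y * x = (x * y * x⁻¹) * x := by rw [h4]
  _ = x * y := by group

theorem isCyclic_zpowers {G : Type*} [Group G] (g : G) : IsCyclic (Subgroup.zpowers g) := by
  refine ⟨⟨g, Subgroup.mem_zpowers g⟩, fun x => ?_⟩
  obtain ⟨k, hk⟩ := Subgroup.mem_zpowers_iff.mp x.2
  exact Subgroup.mem_zpowers_iff.mpr ⟨k, Subtype.ext (by push_cast; exact hk)⟩

theorem exists_invariant_cyclic {G : Type*} [Group G] (A : Subgroup G)
    (hAs : IsSupersolvable A) (N : Subgroup G) (hN : N.Normal) (hNA : N ≤ A)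
    (hNbot : N ≠ ⊥) :
    ∃ m : G, m ∈ N ∧ m ≠ 1 ∧ ∀ a ∈ A, a * m * a⁻¹ ∈ Subgroup.zpowers m := by
  classical
  obtain ⟨n, c, h0, hl, hnorm, hfac⟩ := hAs
  set N' : Subgroup ↥A := N.subgroupOf A with hN'def
  have hN'norm : N'.Normal := hN.subgroupOf A
  have hN'bot : N' ≠ ⊥ := by
    obtain ⟨x, hx, hx1⟩ := (Subgroup.bot_or_exists_ne_one N).resolve_left hNbot
    intro h
    have : (⟨x, hNA hx⟩ : ↥A) ∈ N' := by
      simpa [hN'def, Subgroup.mem_subgroupOf] using hx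
    rw [h, Subgroup.mem_bot] at this
    exact hx1 (by simpa using congrArg (Subtype.val) this)
  have hkey : ∀ k : ℕ, k ≤ n → ∀ hk : k < n + 1, c ⟨k, hk⟩ = c ⟨k, hk⟩ := fun _ _ _ => rfl
  set e : ℕ → Subgroup ↥A := fun k => c ⟨min k n, by omega⟩ with hedef
  have hP : ∃ k, e k ⊓ N' ≠ ⊥ := by
    refine ⟨n, ?_⟩
    have : e n = ⊤ := by
      rw [hedef]
      simp only []
      have : (⟨min n n, by omega⟩ : Fin (n+1)) = Fin.last n := by
        apply Fin.ext; simp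
      rw [this, hl]
    rw [this, top_inf_eq]
    exact hN'bot
  set i := Nat.find hP with hidef
  have hPi : e i ⊓ N' ≠ ⊥ := Nat.find_spec hP
  have hin : i ≤ n := by
    by_contra h
    have h2 : e i = e n := by
      rw [hedef]; simp only []
      congr 1; apply Fin.ext; simp; omega
    have h4 : Nat.find hP ≤ n := Nat.find_le (by rw [← h2]; exact hPi)
    omega
  have hi0 : i ≠ 0 := by
    intro h
    apply hPi
    rw [h, hedef]
    simp only []
    have h3 : (⟨min 0 n, by omega⟩ : Fin (n+1)) = 0 := by apply Fin.ext; simp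
    rw [h3, h0, bot_inf_eq]
  have hj : i - 1 < n := by omega
  set ifin : Fin n := ⟨i - 1, hj⟩ with hifin
  have hcast : c ifin.castSucc = e (i - 1) := by
    rw [hedef]; simp only []
    congr 1; apply Fin.ext; simp [hifin]; omega
  have hsucc : c ifin.succ = e i := by
    rw [hedef]; simp only []
    congr 1; apply Fin.ext; simp [hifin]; omega
  have hprev : e (i - 1) ⊓ N' = ⊥ := by
    by_contra h
    have h5 : Nat.find hP ≤ i - 1 := Nat.find_le h
    omega
  obtain ⟨hle, g, hg, hgen⟩ := hfac ifin
  set D := c ifin.castSucc with hD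
  haveI hDnorm : D.Normal := hnorm _
  set K := c ifin.succ ⊓ N' with hK
  haveI hKnorm : K.Normal := Subgroup.normal_inf_normal _ _
  have hKbot : K ≠ ⊥ := by rw [hK, hsucc]; exact hPi
  -- map to quotient by D
  set π := QuotientGroup.mk' D with hπ
  set f : ↥K →* ↥A ⧸ D := π.comp K.subtype with hf
  have hfinj : Function.Injective f := by
    rw [← MonoidHom.ker_eq_bot_iff]
    rw [Subgroup.eq_bot_iff_forall]
    intro x hx
    have hxD : (x : ↥A) ∈ D := by
      have := hx
      rwa [MonoidHom.mem_ker, hf, MonoidHom.comp_apply, ← MonoidHom.mem_ker,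
        QuotientGroup.ker_mk'] at this
    have hxK : (x : ↥A) ∈ K := x.2
    have : (x : ↥A) ∈ e (i - 1) ⊓ N' := by
      rw [← hcast]
      exact ⟨hxD, hxK.2⟩
    rw [hprev, Subgroup.mem_bot] at this
    exact Subtype.ext this
  have hfrange : ∀ x : ↥K, f x ∈ Subgroup.zpowers (π g) := by
    intro x
    have hx : (x : ↥A) ∈ D ⊔ Subgroup.zpowers g := hgen x.2.1
    have : f x ∈ Subgroup.map π (D ⊔ Subgroup.zpowers g) :=
      ⟨x, hx, rfl⟩
    rw [Subgroup.map_sup, MonoidHom.map_zpowers,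
      (Subgroup.map_eq_bot_iff _).mpr (by rw [QuotientGroup.ker_mk'])] at this
    simpa using this
  set f' : ↥K →* ↥(Subgroup.zpowers (π g)) := f.codRestrict _ hfrange with hf'
  have hf'inj : Function.Injective f' := by
    intro x y hxy
    apply hfinj
    exact congrArg Subtype.val hxy
  haveI : IsCyclic ↥(Subgroup.zpowers (π g)) := isCyclic_zpowers _
  haveI : IsCyclic ↥(f'.range) := Subgroup.isCyclic _
  haveI : IsCyclic ↥K :=
    isCyclic_of_surjective (MonoidHom.ofInjective hf'inj).symm.toMonoidHom
      (MulEquiv.surjective _)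
  obtain ⟨gen, hgen2⟩ := IsCyclic.exists_generator (α := ↥K)
  refine ⟨((gen : ↥A) : G), ?_, ?_, ?_⟩
  · have : (gen : ↥A) ∈ N' := gen.2.2
    rwa [hN'def, Subgroup.mem_subgroupOf] at this
  · intro h
    have hgen1 : (gen : ↥A) = 1 := Subtype.ext h
    have hgenK : gen = (1 : ↥K) := Subtype.ext hgen1
    apply hKbot
    rw [Subgroup.eq_bot_iff_forall]
    intro x hx
    have := hgen2 ⟨x, hx⟩
    rw [hgenK] at this
    obtain ⟨k, hk⟩ := Subgroup.mem_zpowers_iff.mp this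
    have : (⟨x, hx⟩ : ↥K) = 1 := by rw [← hk]; simp
    exact congrArg Subtype.val this
  · intro a ha
    set a' : ↥A := ⟨a, ha⟩ with ha'
    have hconj : a' * (gen : ↥A) * a'⁻¹ ∈ K := hKnorm.conj_mem _ gen.2 a'
    have := hgen2 ⟨_, hconj⟩
    obtain ⟨k, hk⟩ := Subgroup.mem_zpowers_iff.mp this
    have hk2 : ((gen : ↥K) ^ k : ↥K) = ⟨a' * (gen : ↥A) * a'⁻¹, hconj⟩ := hk
    have hk3 : ((gen : ↥A)) ^ k = a' * (gen : ↥A) * a'⁻¹ := by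
      have := congrArg (Subtype.val) hk2
      push_cast at this
      exact this
    refine Subgroup.mem_zpowers_iff.mpr ⟨k, ?_⟩
    have := congrArg (Subtype.val) hk3
    push_cast at this
    exact this

theorem scalar_action' {G : Type*} [Group G] (A N : Subgroup G) (hA : A.Normal)
    (hN : N.Normal) (hNbot : N ≠ ⊥)
    (hmin : ∀ M : Subgroup G, M.Normal → M ≤ N → M ≠ ⊥ → M = N)
    (hab : ∀ x ∈ N, ∀ y ∈ N, x * y = y * x)
    (hcent : ∀ x ∈ N, ∀ c ∈ commutator G, c * x = x * c)
    (hcyc : N ≤ A → ∃ m : G, m ∈ N ∧ m ≠ 1 ∧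
      ∀ a ∈ A, a * m * a⁻¹ ∈ Subgroup.zpowers m) :
    ∀ a ∈ A, ∃ k : ℤ, ∀ x ∈ N, a * x * a⁻¹ = x ^ k := by
  intro a ha
  by_cases hNA : A ⊓ N = ⊥
  · refine ⟨1, fun x hx => ?_⟩
    have h1 : a * x * a⁻¹ * x⁻¹ ∈ A ⊓ N := by
      constructor
      · have h2 : (x * a⁻¹ * x⁻¹) ∈ A := hA.conj_mem a⁻¹ (A.inv_mem ha) x
        have := A.mul_mem ha h2
        simpa [mul_assoc] using this
      · have h3 : a * x * a⁻¹ ∈ N := hN.conj_mem x hx a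
        exact N.mul_mem h3 (N.inv_mem hx)
    rw [hNA, Subgroup.mem_bot] at h1
    have := mul_inv_eq_one.mp h1
    simpa using this
  · have hNleA : N ≤ A := by
      have := hmin (A ⊓ N) inferInstance inf_le_right hNA
      rw [← this]; exact inf_le_left
    obtain ⟨m, hmN, hm1, hminv⟩ := hcyc hNleA
    obtain ⟨k, hk⟩ := Subgroup.mem_zpowers_iff.mp (hminv a ha)
    refine ⟨k, ?_⟩
    set S : Subgroup G :=
      { carrier := {x | x ∈ N ∧ a * x * a⁻¹ = x ^ k}
        one_mem' := ⟨N.one_mem, by simp⟩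
        mul_mem' := by
          rintro x y ⟨hxN, hxk⟩ ⟨hyN, hyk⟩
          refine ⟨N.mul_mem hxN hyN, ?_⟩
          have hco : Commute x y := hab x hxN y hyN
          rw [show a * (x * y) * a⁻¹ = (a * x * a⁻¹) * (a * y * a⁻¹) by group,
            hxk, hyk, ← hco.mul_zpow]
        inv_mem' := by
          rintro x ⟨hxN, hxk⟩
          refine ⟨N.inv_mem hxN, ?_⟩
          rw [show a * x⁻¹ * a⁻¹ = (a * x * a⁻¹)⁻¹ by group, hxk, ← inv_zpow] } with hS
    have hNS : N ≤ S := by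
      have hNm : Subgroup.normalClosure {m} = N :=
        hmin _ Subgroup.normalClosure_normal
          (Subgroup.normalClosure_le_normal (by simpa using hmN))
          (fun h => hm1 (by
            have h9 : m ∈ Subgroup.normalClosure {m} :=
              Subgroup.subset_normalClosure (s := {m}) rfl
            rw [h, Subgroup.mem_bot] at h9
            exact h9))
      rw [← hNm]
      rw [Subgroup.normalClosure]
      refine (Subgroup.closure_le S).mpr ?_
      intro x hxc
      obtain ⟨y, hy, hconj⟩ := Group.mem_conjugatesOfSet_iff.mp hxc
      rw [Set.mem_singleton_iff] at hy
      rw [hy] at hconj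
      obtain ⟨g, hg⟩ := isConj_iff.mp hconj
      subst hg
      have hmemN : g * m * g⁻¹ ∈ N := hN.conj_mem m hmN g
      refine ⟨hmemN, ?_⟩
      have hcomm : (a⁻¹ * g⁻¹ * a * g) * m = m * (a⁻¹ * g⁻¹ * a * g) := by
        have hmem : a⁻¹ * g⁻¹ * a * g ∈ commutator G := by
          have := Subgroup.commutator_mem_commutator
            (Subgroup.mem_top a⁻¹) (Subgroup.mem_top g⁻¹)
          simpa [commutatorElement_def, commutator_def] using this
        exact hcent m hmN _ hmem
      have hconjeq : (a⁻¹ * g⁻¹ * a * g) * m * (a⁻¹ * g⁻¹ * a * g)⁻¹ = m := by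
        rw [hcomm]; group
      calc a * (g * m * g⁻¹) * a⁻¹
          = g * a * ((a⁻¹ * g⁻¹ * a * g) * m * (a⁻¹ * g⁻¹ * a * g)⁻¹) * a⁻¹ * g⁻¹ := by
            group
        _ = g * a * m * a⁻¹ * g⁻¹ := by rw [hconjeq]
        _ = g * (m ^ k) * g⁻¹ := by rw [hk]; group
        _ = (g * m * g⁻¹) ^ k := by rw [conj_zpow]
    exact fun x hx => (hNS hx).2

theorem lift_supersolvable {G : Type*} [Group G] (N : Subgroup G) [hN : N.Normal]
    (hq : IsSupersolvable (G ⧸ N)) (g₀ : G) (hg₀ : g₀ ∈ N)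
    (hgen₀ : N ≤ Subgroup.zpowers g₀) :
    IsSupersolvable G := by
  obtain ⟨n, d, h0, hl, hnorm, hfac⟩ := hq
  set π := QuotientGroup.mk' N with hπ
  have hπsurj : Function.Surjective π := QuotientGroup.mk_surjective
  set cc : Fin (n + 2) → Subgroup G := Fin.cases ⊥ (fun i => (d i).comap π) with hcc
  have hcc0 : cc 0 = ⊥ := rfl
  have hccs : ∀ j : Fin (n + 1), cc j.succ = (d j).comap π := fun j => by
    rw [hcc]; exact Fin.cases_succ _
  refine ⟨n + 1, cc, hcc0, ?_, ?_, ?_⟩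
  · have h1 : Fin.last (n + 1) = (Fin.last n).succ := rfl
    rw [h1, hccs, hl]
    simpa using Subgroup.comap_top (f := π)
  · intro i
    refine Fin.cases ?_ (fun j => ?_) i
    · rw [hcc0]; infer_instance
    · rw [hccs]
      exact Subgroup.Normal.comap (hnorm j) π
  · intro i
    refine Fin.cases ?_ (fun j => ?_) i
    · have hc0 : cc (Fin.castSucc 0) = ⊥ := hcc0
      have hc1 : cc (Fin.succ 0) = (d 0).comap π := hccs 0
      rw [hc0, hc1, h0]
      have hker : (⊥ : Subgroup (G ⧸ N)).comap π = N := by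
        rw [MonoidHom.comap_bot π, QuotientGroup.ker_mk']
      rw [hker]
      exact ⟨bot_le, g₀, hg₀, fun x hx => Subgroup.mem_sup_right (hgen₀ hx)⟩
    · have hc1 : cc (Fin.castSucc j.succ) = (d j.castSucc).comap π := by
        rw [← Fin.succ_castSucc, hccs]
      have hc2 : cc (Fin.succ j.succ) = (d j.succ).comap π := hccs _
      rw [hc1, hc2]
      obtain ⟨hle, g, hg, hgen⟩ := hfac j
      obtain ⟨g', hg'⟩ := hπsurj g
      refine ⟨Subgroup.comap_mono hle, g', by rw [Subgroup.mem_comap, hg']; exact hg, ?_⟩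
      intro x hx
      have hx2 : π x ∈ d j.castSucc ⊔ Subgroup.zpowers g := hgen hx
      haveI : (d j.castSucc).Normal := hnorm _
      rw [← SetLike.mem_coe, Subgroup.normal_mul] at hx2
      obtain ⟨u, hu, z, hz, hxz⟩ := hx2
      obtain ⟨k, hk⟩ := Subgroup.mem_zpowers_iff.mp hz
      have hx3 : x * (g' ^ k)⁻¹ ∈ (d j.castSucc).comap π := by
        rw [Subgroup.mem_comap]
        have heq : π (x * (g' ^ k)⁻¹) = u := by
          rw [map_mul, map_inv, map_zpow, hg', ← hxz, hk]
          group
        rw [heq]; exact hu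
      have hxe : x = (x * (g' ^ k)⁻¹) * g' ^ k := by group
      rw [hxe]
      exact Subgroup.mul_mem _
        (Subgroup.mem_sup_left hx3)
        (Subgroup.mem_sup_right (Subgroup.zpow_mem _ (Subgroup.mem_zpowers g') k))

theorem centralizer_normal' {G : Type*} [Group G] (H : Subgroup G) (hH : H.Normal) :
    (Subgroup.centralizer (H : Set G)).Normal := by
  constructor
  intro x hx g
  rw [Subgroup.mem_centralizer_iff] at hx ⊢
  intro h hh
  have h1 : g⁻¹ * h * g ∈ (H : Set G) := by
    have := hH.conj_mem h hh g⁻¹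
    simpa [mul_assoc] using this
  have h2 := hx _ h1
  calc h * (g * x * g⁻¹) = g * ((g⁻¹ * h * g) * x) * g⁻¹ := by group
    _ = g * (x * (g⁻¹ * h * g)) * g⁻¹ := by rw [h2]
    _ = (g * x * g⁻¹) * h := by group

universe u

theorem baer_aux (nn : ℕ) : ∀ {G : Type u} [Group G] [Finite G],
    Nat.card G ≤ nn →
    ∀ (A B : Subgroup G), A.Normal → B.Normal →
    IsSupersolvable A → IsSupersolvable B →
    (∀ g : G, ∃ a ∈ A, ∃ b ∈ B, g = a * b) →
    Group.IsNilpotent (commutator G) →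
    IsSupersolvable G := by
  induction nn with
  | zero =>
    intro G _ _ hcard
    have : 0 < Nat.card G := Nat.card_pos
    omega
  | succ nn ih =>
    intro G _ _ hcard A B hA hB hAs hBs hprod hG'
    by_cases htriv : Subsingleton G
    · have hbt : (⊥ : Subgroup G) = ⊤ := by
        ext x
        simp [Subgroup.mem_bot, Subsingleton.elim x 1]
      exact ⟨0, fun _ => ⊥, rfl, hbt, fun _ => by show (⊥ : Subgroup G).Normal; infer_instance, fun i => i.elim0⟩
    haveI : Nontrivial G := not_subsingleton_iff_nontrivial.mp htriv
    obtain ⟨N, hN, hNbot, hmin⟩ := minimal_normal_exists G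
    haveI := hN
    haveI := hA
    haveI := hB
    haveI := hG'
    -- G is solvable
    haveI hGsolv : Group.IsSolvable G := by
      have hcomm : ∀ a b : G ⧸ commutator G, a * b = b * a := by
        intro a b
        obtain ⟨x, rfl⟩ := QuotientGroup.mk_surjective a
        obtain ⟨y, rfl⟩ := QuotientGroup.mk_surjective b
        rw [← QuotientGroup.mk_mul, ← QuotientGroup.mk_mul, QuotientGroup.eq]
        have := Subgroup.commutator_mem_commutator
          (Subgroup.mem_top y⁻¹) (Subgroup.mem_top x⁻¹)
        simpa [commutatorElement_def, mul_assoc, commutator_def] using this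
      haveI : Group.IsSolvable (G ⧸ commutator G) := isSolvable_of_comm hcomm
      exact solvable_of_ker_le_range (commutator G).subtype
        (QuotientGroup.mk' (commutator G))
        (by rw [QuotientGroup.ker_mk', Subgroup.range_subtype])
    -- N is abelian
    have hab : ∀ x ∈ N, ∀ y ∈ N, x * y = y * x := by
      have hNN : ⁅N, N⁆ = ⊥ := by
        by_contra hne
        have heq : ⁅N, N⁆ = N :=
          hmin _ inferInstance (Subgroup.commutator_le_left N N) hne
        have hle : ∀ k, N ≤ derivedSeries G k := by
          intro k
          induction k with
          | zero => exact le_top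
          | succ k ihk =>
            rw [derivedSeries_succ, ← heq]
            exact Subgroup.commutator_mono ihk ihk
        obtain ⟨n, hn⟩ := hGsolv.solvable
        exact hNbot (le_bot_iff.mp (hn ▸ hle n))
      intro x hx y hy
      have := Subgroup.commutator_mem_commutator hx hy
      rw [hNN, Subgroup.mem_bot] at this
      have h4 : x * y * x⁻¹ = y := mul_inv_eq_one.mp this
      calc x * y = (x * y * x⁻¹) * x := by group
        _ = y * x := by rw [h4]
    -- commutator G centralizes N
    have hcent : ∀ x ∈ N, ∀ c ∈ commutator G, c * x = x * c := by
      have hW : N ≤ Subgroup.centralizer (commutator G : Set G) := by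
        by_cases hC : ⁅N, commutator G⁆ = ⊥
        · exact Subgroup.commutator_eq_bot_iff_le_centralizer.mp hC
        · -- N ≤ commutator G, use nilpotency
          have hNle : N ≤ commutator G := by
            have heq : ⁅N, commutator G⁆ = N :=
              hmin _ inferInstance (Subgroup.commutator_le_left _ _) hC
            rw [← heq]
            exact Subgroup.commutator_le_right _ _
          obtain ⟨x0, hx0N, hx0⟩ := (Subgroup.bot_or_exists_ne_one N).resolve_left hNbot
          have hsub : (N.subgroupOf (commutator G)).Normal := hN.subgroupOf _
          have hsubbot : N.subgroupOf (commutator G) ≠ ⊥ := by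
            intro h
            have : (⟨x0, hNle hx0N⟩ : ↥(commutator G)) ∈ N.subgroupOf (commutator G) := by
              simpa [Subgroup.mem_subgroupOf] using hx0N
            rw [h, Subgroup.mem_bot] at this
            exact hx0 (by simpa using congrArg Subtype.val this)
          obtain ⟨z, hzH, hz1, hzc⟩ := nilp_center _ hsub hsubbot
          have hWnorm : (N ⊓ Subgroup.centralizer (commutator G : Set G)).Normal :=
            Subgroup.normal_inf_normal _ _ (hK := centralizer_normal' _ inferInstance)
          have hWbot : N ⊓ Subgroup.centralizer (commutator G : Set G) ≠ ⊥ := by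
            intro h
            have hzmem : (z : G) ∈ N ⊓ Subgroup.centralizer (commutator G : Set G) :=
              Subgroup.mem_inf.mpr ⟨(Subgroup.mem_subgroupOf).mp hzH,
                Subgroup.mem_centralizer_iff.mpr (fun h hh =>
                  congrArg Subtype.val ((Subgroup.mem_center_iff.mp hzc) ⟨h, hh⟩))⟩
            rw [h, Subgroup.mem_bot] at hzmem
            exact hz1 (Subtype.ext hzmem)
          have := hmin _ hWnorm inf_le_left hWbot
          rw [← this]
          exact inf_le_right
      intro x hx c hc
      exact (Subgroup.mem_centralizer_iff.mp (hW hx)) c hc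
    -- scalar action of A and B on N
    have hscA : ∀ a ∈ A, ∃ k : ℤ, ∀ x ∈ N, a * x * a⁻¹ = x ^ k :=
      scalar_action' A N hA hN hNbot hmin hab hcent
        (fun hle => exists_invariant_cyclic A hAs N hN hle hNbot)
    have hscB : ∀ b ∈ B, ∃ k : ℤ, ∀ x ∈ N, b * x * b⁻¹ = x ^ k :=
      scalar_action' B N hB hN hNbot hmin hab hcent
        (fun hle => exists_invariant_cyclic B hBs N hN hle hNbot)
    -- every cyclic subgroup of N is normal in G
    have hzpnorm : ∀ x ∈ N, (Subgroup.zpowers x).Normal := by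
      intro x hx
      constructor
      intro y hy g
      obtain ⟨a, ha, b, hb, rfl⟩ := hprod g
      obtain ⟨ka, hka⟩ := hscA a ha
      obtain ⟨kb, hkb⟩ := hscB b hb
      obtain ⟨j, hj⟩ := Subgroup.mem_zpowers_iff.mp hy
      have hconj : (a * b) * x * (a * b)⁻¹ = x ^ (kb * ka) := by
        have h1 : (a * b) * x * (a * b)⁻¹ = a * (b * x * b⁻¹) * a⁻¹ := by group
        rw [h1, hkb x hx, hka _ (Subgroup.zpow_mem N hx kb), ← zpow_mul]
      refine Subgroup.mem_zpowers_iff.mpr ⟨j * (kb * ka), ?_⟩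
      rw [← hj]
      calc x ^ (j * (kb * ka)) = (x ^ (kb * ka)) ^ j := by
            rw [← zpow_mul, mul_comm]
        _ = ((a * b) * x * (a * b)⁻¹) ^ j := by rw [hconj]
        _ = (a * b) * x ^ j * (a * b)⁻¹ := conj_zpow
    -- N has prime order
    haveI : Nontrivial ↥N := (Subgroup.nontrivial_iff_ne_bot N).mpr hNbot
    have hcard1 : Nat.card ↥N ≠ 1 := by
      have := Finite.one_lt_card (α := ↥N)
      omega
    obtain ⟨p, hp, hpdvd⟩ := Nat.exists_prime_and_dvd hcard1
    haveI : Fintype ↥N := Fintype.ofFinite _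
    haveI : Fact p.Prime := ⟨hp⟩
    obtain ⟨x', hx'⟩ := exists_prime_orderOf_dvd_card (G := ↥N) p
      (by rwa [← Nat.card_eq_fintype_card])
    set x : G := ↑x' with hxdef
    have hxN : x ∈ N := x'.2
    have hx1 : x ≠ 1 := by
      intro h
      have : orderOf x' = 1 := by
        rw [← Subgroup.orderOf_coe, ← hxdef, h, orderOf_one]
      rw [hx'] at this
      exact hp.one_lt.ne' this
    have hZN : Subgroup.zpowers x = N := by
      apply hmin _ (hzpnorm x hxN)
      · exact (Subgroup.zpowers_le).mpr hxN
      · intro h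
        have : x ∈ (⊥ : Subgroup G) := h ▸ Subgroup.mem_zpowers x
        exact hx1 (Subgroup.mem_bot.mp this)
    -- quotient by N
    set π := QuotientGroup.mk' N with hπdef
    have hπsurj : Function.Surjective π := QuotientGroup.mk_surjective
    have hcardN : Nat.card ↥N = p := by
      rw [← hZN, Nat.card_zpowers, hxdef, Subgroup.orderOf_coe, hx']
    -- apply induction hypothesis to the quotient
    have hcardlt : Nat.card (G ⧸ N) ≤ nn := by
      have he : Nat.card G = Nat.card (G ⧸ N) * Nat.card ↥N :=
        Subgroup.card_eq_card_quotient_mul_card_subgroup N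
      have hp2 : 2 ≤ Nat.card ↥N := by
        rw [hcardN]; exact hp.two_le
      have hq1 : 0 < Nat.card (G ⧸ N) := Nat.card_pos
      nlinarith
    have hcommQ : commutator (G ⧸ N) = Subgroup.map π (commutator G) := by
      rw [commutator_def, commutator_def, Subgroup.map_commutator,
        Subgroup.map_top_of_surjective _ hπsurj]
    have hnilQ : Group.IsNilpotent ↥(commutator (G ⧸ N)) := by
      rw [hcommQ]
      exact nilpotent_of_surjective (π.subgroupMap (commutator G))
        (π.subgroupMap_surjective (commutator G))
    have hq : IsSupersolvable (G ⧸ N) := by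
      refine ih hcardlt (A.map π) (B.map π) (hA.map π hπsurj) (hB.map π hπsurj)
        (ss_of_surjective (π.subgroupMap A) (π.subgroupMap_surjective A) hAs)
        (ss_of_surjective (π.subgroupMap B) (π.subgroupMap_surjective B) hBs)
        ?_ hnilQ
      intro q
      obtain ⟨g, rfl⟩ := hπsurj q
      obtain ⟨a, ha, b, hb, rfl⟩ := hprod g
      exact ⟨π a, Subgroup.mem_map_of_mem π ha, π b, Subgroup.mem_map_of_mem π hb,
        map_mul π a b⟩
    exact lift_supersolvable N hq x hxN (le_of_eq hZN.symm)

/-- Baer's theorem: if `G = AB` with `A`, `B` normal supersoluble subgroups and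
the derived subgroup of `G` nilpotent, then `G` is supersoluble. -/
theorem stmt_5 {G : Type*} [Group G] [Finite G] (A B : Subgroup G)
    (hA : A.Normal) (hB : B.Normal)
    (hAs : IsSupersolvable A) (hBs : IsSupersolvable B)
    (hprod : ∀ g : G, ∃ a ∈ A, ∃ b ∈ B, g = a * b)
    (hG' : Group.IsNilpotent (commutator G)) :
    IsSupersolvable G := baer_aux (Nat.card G) le_rfl A B hA hB hAs hBs hprod hG'
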